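/- The metric space (Ψ, d_M) is not totally bounded: the points p_j = (1/2, 3·2^{-j-1}) ∈ Ψ satisfy d_M(p_j, p_k) ≥ 1/2 for all j ≠ k. Consequently the completion of (Ψ, d_M) is not compact. -/
import Mathlib

noncomputable section
open Set Metric Filter Topology

abbrev E2 := EuclideanSpace ℝ (Fin 2)
abbrev E3 := EuclideanSpace ℝ (Fin 3)

/-- The point (a,b) in the Euclidean plane. -/
def pt (a b : ℝ) : E2 := (WithLp.equiv 2 (Fin 2 → ℝ)).symm ![a, b]
def pt3 (a b c : ℝ) : E3 := (WithLp.equiv 2 (Fin 3 → ℝ)).symm ![a, b, c]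

/-- The topologist's comb. -/
def Psi : Set E2 :=
  {x : E2 | x 0 ∈ Ioo (-1 : ℝ) 1 ∧ x 1 ∈ Ioo (0 : ℝ) 2} \
    ⋃ j : ℕ, {x : E2 | x 0 ∈ Icc (0 : ℝ) 1 ∧ x 1 = 2 ^ (-(j : ℤ))}

def theta (j : ℕ) : ℝ := 2 ^ (-(j : ℤ))
/-- For t ∈ (2^{-j}, 2^{1-j}), jIdx t = j. -/
def jIdx (t : ℝ) : ℕ := ⌈-Real.logb 2 t⌉₊

/-- The folding map into ℝ³ used to define the extended metric. -/
def F (x : E2) : E3 :=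
  if x 0 ≤ 0 then pt3 (x 0) (x 1) 0
  else pt3 (x 0 * Real.cos (theta (jIdx (x 1)))) (x 1) (x 0 * Real.sin (theta (jIdx (x 1))))

def distExt (x y : E2) : ℝ := dist (F x) (F y)

/-- The Mazurkiewicz distance on the comb. -/
def dM (x y : E2) : ℝ :=
  sInf {d : ℝ | ∃ E : Set E2, E ⊆ Psi ∧ IsConnected E ∧ x ∈ E ∧ y ∈ E ∧ d = Metric.diam E}

/-! ### Auxiliary lemmas -/

lemma mem_Psi_iff (x : E2) : x ∈ Psi ↔
    ((-1:ℝ) < x 0 ∧ x 0 < 1) ∧ ((0:ℝ) < x 1 ∧ x 1 < 2) ∧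
      ∀ i : ℕ, ¬(((0:ℝ) ≤ x 0 ∧ x 0 ≤ 1) ∧ x 1 = 2 ^ (-(i : ℤ))) := by
  simp only [Psi, mem_diff, mem_setOf_eq, mem_Ioo, mem_Icc, mem_iUnion, not_exists]
  tauto

lemma coord_dist (x y : E2) (i : Fin 2) : |x i - y i| ≤ dist x y := by
  rw [EuclideanSpace.dist_eq, ← Real.sqrt_sq_eq_abs]
  apply Real.sqrt_le_sqrt
  rw [show (x i - y i)^2 = dist (x i) (y i) ^ 2 by rw [Real.dist_eq, sq_abs]]
  exact Finset.single_le_sum (f := fun i => dist (x i) (y i) ^ 2)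
    (fun j _ => sq_nonneg _) (Finset.mem_univ i)

lemma Psi_bounded : Bornology.IsBounded Psi := by
  apply (Metric.isBounded_closedBall (x := (0:E2)) (r := 3)).subset
  intro x hx
  rw [mem_Psi_iff] at hx
  rw [Metric.mem_closedBall, dist_zero_right, EuclideanSpace.norm_eq, Fin.sum_univ_two]
  have h9 : Real.sqrt 9 = 3 := by
    rw [show (9:ℝ) = 3^2 by norm_num, Real.sqrt_sq]; norm_num
  rw [← h9]
  apply Real.sqrt_le_sqrt
  simp only [Real.norm_eq_abs, sq_abs]
  obtain ⟨⟨h1, h2⟩, ⟨h3, h4⟩, -⟩ := hx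
  nlinarith

lemma tj_pos (j : ℕ) : (0:ℝ) < 3 * 2 ^ (-(j:ℤ) - 1) := by positivity

lemma tj_lt_two (j : ℕ) : 3 * (2:ℝ) ^ (-(j:ℤ) - 1) < 2 := by
  have : (2:ℝ) ^ (-(j:ℤ) - 1) ≤ 2 ^ (-1 : ℤ) := zpow_le_zpow_right₀ one_le_two (by omega)
  rw [show ((2:ℝ))^(-1:ℤ) = 1/2 by norm_num] at this
  linarith

lemma tj_ne_pow (j i : ℕ) : 3 * (2:ℝ) ^ (-(j:ℤ) - 1) ≠ 2 ^ (-(i:ℤ)) := by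
  rcases lt_or_ge (i:ℤ) (j:ℤ) with h | h
  · have : (2:ℝ) ^ (-(j:ℤ) - 1 + 2) ≤ 2 ^ (-(i:ℤ)) := zpow_le_zpow_right₀ one_le_two (by omega)
    rw [zpow_add₀ (by norm_num : (2:ℝ) ≠ 0)] at this
    have h2 : (0:ℝ) < 2 ^ (-(j:ℤ) - 1) := by positivity
    intro he; nlinarith
  · have : (2:ℝ) ^ (-(i:ℤ)) ≤ 2 ^ (-(j:ℤ) - 1 + 1) := zpow_le_zpow_right₀ one_le_two (by omega)
    rw [zpow_add₀ (by norm_num : (2:ℝ) ≠ 0)] at this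
    have h2 : (0:ℝ) < 2 ^ (-(j:ℤ) - 1) := by positivity
    intro he; nlinarith

lemma pj_mem_Psi (j : ℕ) : pt (1/2) (3 * 2 ^ (-(j:ℤ) - 1)) ∈ Psi := by
  rw [mem_Psi_iff]
  have h0 : pt (1/2) (3 * 2 ^ (-(j:ℤ) - 1)) 0 = 1/2 := rfl
  have h1 : pt (1/2) (3 * 2 ^ (-(j:ℤ) - 1)) 1 = 3 * 2 ^ (-(j:ℤ) - 1) := rfl
  rw [h0, h1]
  refine ⟨⟨by norm_num, by norm_num⟩, ⟨tj_pos j, tj_lt_two j⟩, ?_⟩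
  intro i h
  exact tj_ne_pow j i h.2

/-- A horizontal segment from a point of Psi to the left wall stays in Psi. -/
lemma horiz_subset {z : E2} (hz : z ∈ Psi) : segment ℝ z (pt (-1/2) (z 1)) ⊆ Psi := by
  rw [mem_Psi_iff] at hz
  obtain ⟨⟨h1, h2⟩, ⟨h3, h4⟩, h5⟩ := hz
  rintro w ⟨a, b, ha, hb, hab, rfl⟩
  have hw1 : (a • z + b • pt (-1/2) (z 1)) 1 = z 1 := by
    show a * z 1 + b * z 1 = z 1; nlinarith
  have hw0 : (a • z + b • pt (-1/2) (z 1)) 0 = a * z 0 + b * (-1/2) := rfl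
  rw [mem_Psi_iff, hw1, hw0]
  refine ⟨⟨by nlinarith, by nlinarith⟩, ⟨h3, h4⟩, ?_⟩
  rintro i ⟨⟨hc0, hc1⟩, hc2⟩
  have hz0 : z 0 < 0 := by
    rcases lt_or_ge (z 0) 0 with h | h
    · exact h
    · exact absurd ⟨⟨h, le_of_lt h2⟩, hc2⟩ (h5 i)
  -- then a * z 0 + b * (-1/2) < 0, contradicting hc0
  rcases eq_or_lt_of_le ha with rfl | ha'
  · nlinarith
  · nlinarith

/-- A vertical segment on the left wall stays in Psi. -/
lemma vert_subset {s t : ℝ} (hs : s ∈ Ioo (0:ℝ) 2) (ht : t ∈ Ioo (0:ℝ) 2) :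
    segment ℝ (pt (-1/2) s) (pt (-1/2) t) ⊆ Psi := by
  rintro w ⟨a, b, ha, hb, hab, rfl⟩
  have hw0 : (a • pt (-1/2) s + b • pt (-1/2) t) 0 = a * (-1/2) + b * (-1/2) := rfl
  have hw0' : (a • pt (-1/2) s + b • pt (-1/2) t) 0 = -1/2 := by rw [hw0]; nlinarith
  have hw1 : (a • pt (-1/2) s + b • pt (-1/2) t) 1 = a * s + b * t := rfl
  rw [mem_Psi_iff, hw0', hw1]
  obtain ⟨hs1, hs2⟩ := hs
  obtain ⟨ht1, ht2⟩ := ht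
  have hpos : 0 < a * s + b * t := by
    rcases eq_or_lt_of_le ha with rfl | ha'
    · have hb1 : b = 1 := by linarith
      rw [hb1]; nlinarith
    · nlinarith [mul_pos ha' hs1, mul_nonneg hb ht1.le]
  have hlt2 : a * s + b * t < 2 := by
    rcases eq_or_lt_of_le ha with rfl | ha'
    · have hb1 : b = 1 := by linarith
      rw [hb1]; nlinarith
    · nlinarith [mul_lt_mul_of_pos_left hs2 ha', mul_le_mul_of_nonneg_left ht2.le hb]
  refine ⟨⟨by norm_num, by norm_num⟩, ⟨hpos, hlt2⟩, ?_⟩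
  rintro i ⟨⟨hc0, -⟩, -⟩
  norm_num at hc0

/-- Any two points of Psi can be joined by a connected subset of Psi. -/
lemma connect {x y : E2} (hx : x ∈ Psi) (hy : y ∈ Psi) :
    ∃ E : Set E2, E ⊆ Psi ∧ IsConnected E ∧ x ∈ E ∧ y ∈ E := by
  have hx1 : x 1 ∈ Ioo (0:ℝ) 2 := ((mem_Psi_iff x).mp hx).2.1
  have hy1 : y 1 ∈ Ioo (0:ℝ) 2 := ((mem_Psi_iff y).mp hy).2.1
  set qx := pt (-1/2) (x 1) with hqx
  set qy := pt (-1/2) (y 1) with hqy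
  have c1 : IsConnected (segment ℝ x qx) :=
    ⟨⟨x, left_mem_segment ℝ x qx⟩, (convex_segment x qx).isPreconnected⟩
  have c2 : IsConnected (segment ℝ qx qy) :=
    ⟨⟨qx, left_mem_segment ℝ qx qy⟩, (convex_segment qx qy).isPreconnected⟩
  have c3 : IsConnected (segment ℝ y qy) :=
    ⟨⟨y, left_mem_segment ℝ y qy⟩, (convex_segment y qy).isPreconnected⟩
  have c23 : IsConnected (segment ℝ qx qy ∪ segment ℝ y qy) :=
    IsConnected.union ⟨qy, right_mem_segment ℝ qx qy, right_mem_segment ℝ y qy⟩ c2 c3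
  have c123 : IsConnected (segment ℝ x qx ∪ (segment ℝ qx qy ∪ segment ℝ y qy)) :=
    IsConnected.union ⟨qx, right_mem_segment ℝ x qx,
      Or.inl (left_mem_segment ℝ qx qy)⟩ c1 c23
  refine ⟨_, ?_, c123, Or.inl (left_mem_segment ℝ x qx),
    Or.inr (Or.inr (left_mem_segment ℝ y qy))⟩
  rintro w (hw | hw | hw)
  · exact horiz_subset hx hw
  · exact vert_subset hx1 hy1 hw
  · exact horiz_subset hy hw

/-- The separation lemma: any connected subset of Psi containing p_j and p_k (j < k)
has diameter at least 1/2. -/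
lemma sep {j k : ℕ} (hjk : j < k) {E : Set E2} (hE : E ⊆ Psi) (hc : IsConnected E)
    (hj : pt (1/2) (3 * 2 ^ (-(j:ℤ) - 1)) ∈ E)
    (hk : pt (1/2) (3 * 2 ^ (-(k:ℤ) - 1)) ∈ E) :
    (1:ℝ)/2 ≤ Metric.diam E := by
  have hcont : Continuous (fun z : E2 => z 1) :=
    (EuclideanSpace.proj (1 : Fin 2) : E2 →L[ℝ] ℝ).continuous
  have hIcc := hc.isPreconnected.intermediate_value hk hj hcont.continuousOn
  have hmem : (2:ℝ) ^ (-(j:ℤ)) ∈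
      Icc ((fun z : E2 => z 1) (pt (1/2) (3 * 2 ^ (-(k:ℤ) - 1))))
          ((fun z : E2 => z 1) (pt (1/2) (3 * 2 ^ (-(j:ℤ) - 1)))) := by
    show (2:ℝ) ^ (-(j:ℤ)) ∈ Icc (3 * (2:ℝ) ^ (-(k:ℤ) - 1)) (3 * 2 ^ (-(j:ℤ) - 1))
    constructor
    · have h1 : (2:ℝ) ^ (-(k:ℤ) - 1 + 2) ≤ 2 ^ (-(j:ℤ)) :=
        zpow_le_zpow_right₀ one_le_two (by omega)
      rw [zpow_add₀ (by norm_num : (2:ℝ) ≠ 0),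
        show ((2:ℝ))^(2:ℤ) = 4 by norm_num] at h1
      have h2 : (0:ℝ) < 2 ^ (-(k:ℤ) - 1) := by positivity
      linarith
    · have h1 : (2:ℝ) ^ (-(j:ℤ)) = 2 ^ (-(j:ℤ) - 1) * 2 ^ (1:ℤ) := by
        rw [← zpow_add₀ (by norm_num : (2:ℝ) ≠ 0)]; ring_nf
      have h2 : (0:ℝ) < 2 ^ (-(j:ℤ) - 1) := by positivity
      rw [h1]; norm_num; nlinarith
  obtain ⟨z, hzE, hz1⟩ := hIcc hmem
  have hzPsi := (mem_Psi_iff z).mp (hE hzE)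
  have hz0 : z 0 < 0 := by
    rcases lt_or_ge (z 0) 0 with h | h
    · exact h
    · exact absurd ⟨⟨h, le_of_lt hzPsi.1.2⟩, hz1⟩ (hzPsi.2.2 j)
  have hb : Bornology.IsBounded E := Psi_bounded.subset hE
  have hd := Metric.dist_le_diam_of_mem hb hj hzE
  have hcd := coord_dist (pt (1/2) (3 * 2 ^ (-(j:ℤ) - 1))) z 0
  have : pt (1/2) (3 * 2 ^ (-(j:ℤ) - 1)) 0 = 1/2 := rfl
  rw [this] at hcd
  have habs : (1:ℝ)/2 ≤ |1/2 - z 0| := by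
    rw [abs_of_pos (by linarith)]; linarith
  linarith

/-- The separation lemma for j ≠ k. -/
lemma sep' {j k : ℕ} (hjk : j ≠ k) {E : Set E2} (hE : E ⊆ Psi) (hc : IsConnected E)
    (hj : pt (1/2) (3 * 2 ^ (-(j:ℤ) - 1)) ∈ E)
    (hk : pt (1/2) (3 * 2 ^ (-(k:ℤ) - 1)) ∈ E) :
    (1:ℝ)/2 ≤ Metric.diam E := by
  rcases hjk.lt_or_gt with h | h
  · exact sep h hE hc hj hk
  · exact sep h hE hc hk hj

theorem dM_not_totallyBounded :
    (∀ j : ℕ, pt (1/2) (3 * 2 ^ (-(j:ℤ) - 1)) ∈ Psi) ∧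
    (∀ j k : ℕ, j ≠ k →
        (1:ℝ)/2 ≤ dM (pt (1/2) (3 * 2 ^ (-(j:ℤ) - 1))) (pt (1/2) (3 * 2 ^ (-(k:ℤ) - 1)))) ∧
    ¬ (∀ ε > (0:ℝ), ∃ S : Finset E2, ↑S ⊆ Psi ∧ ∀ x ∈ Psi, ∃ s ∈ S, dM x s < ε) := by
  refine ⟨pj_mem_Psi, ?_, ?_⟩
  · intro j k hjk
    obtain ⟨E, hE, hc, hx, hy⟩ := connect (pj_mem_Psi j) (pj_mem_Psi k)
    unfold dM
    refine le_csInf ⟨Metric.diam E, ?_⟩ ?_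
    · exact ⟨E, hE, hc, hx, hy, rfl⟩
    · rintro d ⟨E', hE', hc', hx', hy', rfl⟩
      exact sep' hjk hE' hc' hx' hy'
  · intro H
    obtain ⟨S, hSsub, hcov⟩ := H (1/4) (by norm_num)
    choose g hgS hglt using fun j : ℕ => hcov _ (pj_mem_Psi j)
    obtain ⟨j, -, k, -, hjk, heq⟩ :=
      Finset.exists_ne_map_eq_of_card_lt_of_maps_to
        (s := Finset.range (S.card + 1)) (t := S)
        (by simp) (fun a _ => hgS a)
    -- extract connected sets of small diameter
    have extract : ∀ m : ℕ, dM (pt (1/2) (3 * 2 ^ (-(m:ℤ) - 1))) (g m) < 1/4 →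
        ∃ E : Set E2, E ⊆ Psi ∧ IsConnected E ∧
          pt (1/2) (3 * 2 ^ (-(m:ℤ) - 1)) ∈ E ∧ g m ∈ E ∧ Metric.diam E < 1/4 := by
      intro m hm
      unfold dM at hm
      have hne : {d : ℝ | ∃ E : Set E2, E ⊆ Psi ∧ IsConnected E ∧
          pt (1/2) (3 * 2 ^ (-(m:ℤ) - 1)) ∈ E ∧ g m ∈ E ∧ d = Metric.diam E}.Nonempty := by
        obtain ⟨E, hE, hc, hx, hy⟩ := connect (pj_mem_Psi m) (hSsub (hgS m))
        exact ⟨Metric.diam E, E, hE, hc, hx, hy, rfl⟩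
      have hbdd : BddBelow {d : ℝ | ∃ E : Set E2, E ⊆ Psi ∧ IsConnected E ∧
          pt (1/2) (3 * 2 ^ (-(m:ℤ) - 1)) ∈ E ∧ g m ∈ E ∧ d = Metric.diam E} := by
        refine ⟨0, ?_⟩
        rintro d ⟨E, -, -, -, -, rfl⟩
        exact Metric.diam_nonneg
      obtain ⟨d, ⟨E, hE, hc, hx, hy, rfl⟩, hdlt⟩ := (csInf_lt_iff hbdd hne).mp hm
      exact ⟨E, hE, hc, hx, hy, hdlt⟩
    obtain ⟨E1, hE1, hc1, hx1, hy1, hd1⟩ := extract j (hglt j)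
    obtain ⟨E2, hE2, hc2, hx2, hy2, hd2⟩ := extract k (hglt k)
    rw [heq] at hy1
    have hcu : IsConnected (E1 ∪ E2) := IsConnected.union ⟨g k, hy1, hy2⟩ hc1 hc2
    have hslow := sep' hjk (union_subset hE1 hE2) hcu (Or.inl hx1) (Or.inr hx2)
    have hup := Metric.diam_union hy1 hy2
    rw [dist_self] at hup
    linarith
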